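/- arXiv:0711.3694 — 2 statements merged into one kernel-verified Lean document; each statement's English description precedes it below -/
import Mathlib

section
/- Let h₀ : U → ℝ be proper convex lower semicontinuous on a Hilbert space U, p ≥ 2, q the conjugate exponent, λ > 0, T > t ≥ 0, and define K(u) = ∫_t^T e^{-λτ} h₀(u(τ)) dτ on L^p_λ(t,T;U). Then for u ∈ dom(K), the subdifferential of K at u (with respect to the duality pairing ⟨φ,w⟩ = ∫_t^T e^{-λτ}(φ(τ)|w(τ))_U dτ) equals {φ ∈ L^q_λ(t,T;U) : φ(τ) ∈ ∂h₀(u(τ)) for a.e. τ ∈ [t,T)}. -/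
open MeasureTheory
open scoped InnerProductSpace

lemma aux_inner_integrable
    {U : Type*} [NormedAddCommGroup U] [InnerProductSpace ℝ U]
    {μ : Measure ℝ} {p q : ℝ} (hp1 : 1 < p) (hq1 : 1 < q)
    (hpq : 1 / p + 1 / q = 1)
    {Φ W : ℝ → U}
    (hΦ : MemLp Φ (ENNReal.ofReal q) μ) (hW : MemLp W (ENNReal.ofReal p) μ) :
    Integrable (fun τ => ⟪Φ τ, W τ⟫_ℝ) μ := by
  have hq0 : 0 < q := lt_trans zero_lt_one hq1
  have hp0 : 0 < p := lt_trans zero_lt_one hp1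
  have hconj : Real.HolderConjugate q p :=
    Real.holderConjugate_iff.mpr ⟨hq1, by rw [inv_eq_one_div, inv_eq_one_div]; linarith⟩
  have hΦi : Integrable (fun τ => ‖Φ τ‖ ^ q) μ := by
    have h := hΦ.integrable_norm_rpow (by simp [hq0]) (by simp)
    rwa [ENNReal.toReal_ofReal hq0.le] at h
  have hWi : Integrable (fun τ => ‖W τ‖ ^ p) μ := by
    have h := hW.integrable_norm_rpow (by simp [hp0]) (by simp)
    rwa [ENNReal.toReal_ofReal hp0.le] at h
  refine Integrable.mono' ((hΦi.div_const q).add (hWi.div_const p))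
    (hΦ.aestronglyMeasurable.inner hW.aestronglyMeasurable) ?_
  filter_upwards with τ
  calc ‖⟪Φ τ, W τ⟫_ℝ‖ ≤ ‖Φ τ‖ * ‖W τ‖ := norm_inner_le_norm _ _
  _ ≤ ‖Φ τ‖ ^ q / q + ‖W τ‖ ^ p / p :=
      Real.young_inequality_of_nonneg (norm_nonneg _) (norm_nonneg _) hconj

/-- The subdifferential of `K(u) = ∫_t^T e^{-λτ} h₀(u(τ)) dτ` on `L^p_λ(t,T;U)`
at `u ∈ dom K`, with respect to the weighted duality pairing
`⟨φ,w⟩ = ∫_t^T e^{-λτ}(φ(τ)|w(τ))_U dτ`, equals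
`{φ ∈ L^q_λ(t,T;U) : φ(τ) ∈ ∂h₀(u(τ)) a.e. on [t,T)}`. -/
theorem subdifferential_integral_functional
    {U : Type*} [NormedAddCommGroup U] [InnerProductSpace ℝ U] [CompleteSpace U]
    (t T lam p q : ℝ) (ht : 0 ≤ t) (hT : t < T) (hlam : 0 < lam)
    (hp : 2 ≤ p) (hpq : 1 / p + 1 / q = 1)
    (h₀ : U → ℝ) (hconv : ConvexOn ℝ Set.univ h₀) (hlsc : LowerSemicontinuous h₀)
    (u : ℝ → U)
    (hu : MemLp (fun τ => Real.exp (-lam * τ / p) • u τ)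
      (ENNReal.ofReal p) (volume.restrict (Set.Ico t T)))
    (hKu : IntegrableOn (fun τ => Real.exp (-lam * τ) * h₀ (u τ)) (Set.Ico t T))
    (φ : ℝ → U)
    (hφ : MemLp (fun τ => Real.exp (-lam * τ / q) • φ τ)
      (ENNReal.ofReal q) (volume.restrict (Set.Ico t T))) :
    -- `φ ∈ ∂K(u)` ...
    ((∀ w : ℝ → U,
        MemLp (fun τ => Real.exp (-lam * τ / p) • w τ)
          (ENNReal.ofReal p) (volume.restrict (Set.Ico t T)) →
        IntegrableOn (fun τ => Real.exp (-lam * τ) * h₀ (w τ)) (Set.Ico t T) →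
        (∫ τ in Set.Ico t T, Real.exp (-lam * τ) * h₀ (u τ))
          + ∫ τ in Set.Ico t T, Real.exp (-lam * τ) * ⟪φ τ, w τ - u τ⟫_ℝ
          ≤ ∫ τ in Set.Ico t T, Real.exp (-lam * τ) * h₀ (w τ))
    -- ... iff `φ(τ) ∈ ∂h₀(u(τ))` for a.e. `τ ∈ [t,T)`.
     ↔ (∀ᵐ τ ∂(volume.restrict (Set.Ico t T)),
          ∀ z : U, h₀ (u τ) + ⟪φ τ, z - u τ⟫_ℝ ≤ h₀ z)) := by
  classical
  set μ : Measure ℝ := volume.restrict (Set.Ico t T) with hμdef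
  haveI : IsFiniteMeasure μ := by
    constructor
    rw [hμdef, Measure.restrict_apply_univ, Real.volume_Ico]
    exact ENNReal.ofReal_lt_top
  have hp0 : 0 < p := by linarith
  have hp1 : 1 < p := by linarith
  have hq0 : 0 < q := by
    have h1 : 1 / p < 1 := by rw [div_lt_one hp0]; linarith
    have h2 : 0 < 1 / q := by linarith
    exact (one_div_pos).1 h2
  have hq1 : 1 < q := by
    have h1 : 0 < 1 / p := by positivity
    have h2 : 1 / q < 1 := by linarith
    rw [div_lt_one hq0] at h2
    exact h2
  have hexp_pq : ∀ τ : ℝ, Real.exp (-lam * τ / q) * Real.exp (-lam * τ / p)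
      = Real.exp (-lam * τ) := by
    intro τ
    rw [← Real.exp_add]
    congr 1
    have h : -lam * τ / q + -lam * τ / p = (-lam * τ) * (1 / p + 1 / q) := by ring
    rw [h, hpq, mul_one]
  -- MemLp of constants (weighted)
  have hconstLp : ∀ z : U, MemLp (fun τ => Real.exp (-lam * τ / p) • z)
      (ENNReal.ofReal p) μ := by
    intro z
    refine MemLp.of_bound ?_ ‖z‖ ?_
    · exact (Continuous.aestronglyMeasurable (by fun_prop))
    · filter_upwards [ae_restrict_mem measurableSet_Ico] with τ hτ
      rw [norm_smul, Real.norm_eq_abs, abs_of_pos (Real.exp_pos _)]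
      have hτ0 : 0 ≤ τ := le_trans ht hτ.1
      have hle : Real.exp (-lam * τ / p) ≤ 1 := by
        rw [Real.exp_le_one_iff]
        apply div_nonpos_of_nonpos_of_nonneg _ hp0.le
        nlinarith
      nlinarith [norm_nonneg z]
  -- Integrability of weighted constants
  have hconstInt : ∀ cr : ℝ, Integrable (fun τ => Real.exp (-lam * τ) * cr) μ := by
    intro cr
    have hcont : Continuous fun τ : ℝ => Real.exp (-lam * τ) * cr := by fun_prop
    exact (hcont.integrableOn_Icc).mono_set Set.Ico_subset_Icc_self
  -- Hölder: the weighted inner products are integrable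
  have hInner : ∀ v : ℝ → U,
      MemLp (fun τ => Real.exp (-lam * τ / p) • v τ) (ENNReal.ofReal p) μ →
      Integrable (fun τ => Real.exp (-lam * τ) * ⟪φ τ, v τ⟫_ℝ) μ := by
    intro v hv
    have h := aux_inner_integrable hp1 hq1 hpq hφ hv
    refine h.congr (Filter.Eventually.of_forall fun τ => ?_)
    simp only [real_inner_smul_left, real_inner_smul_right, ← mul_assoc]
    rw [mul_comm (Real.exp (-lam * τ / p)) (Real.exp (-lam * τ / q)), hexp_pq τ]
  constructor
  · -- hard direction
    intro H
    -- Step 1: pointwise subgradient inequality for each fixed z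
    have lemA : ∀ z : U, ∀ᵐ τ ∂μ, h₀ (u τ) + ⟪φ τ, z - u τ⟫_ℝ ≤ h₀ z := by
      intro z
      have hWz : MemLp (fun τ => Real.exp (-lam * τ / p) • (z - u τ))
          (ENNReal.ofReal p) μ := by
        refine ((hconstLp z).sub hu).ae_eq (Filter.Eventually.of_forall fun τ => ?_)
        simp only [Pi.sub_apply, smul_sub]
      have hiz : Integrable (fun τ => Real.exp (-lam * τ) * ⟪φ τ, z - u τ⟫_ℝ) μ := by
        have h := aux_inner_integrable hp1 hq1 hpq hφ hWz
        refine h.congr (Filter.Eventually.of_forall fun τ => ?_)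
        simp only [real_inner_smul_left, real_inner_smul_right, ← mul_assoc]
        rw [mul_comm (Real.exp (-lam * τ / p)) (Real.exp (-lam * τ / q)), hexp_pq τ]
      have hfi : Integrable (fun τ => Real.exp (-lam * τ) * h₀ z
          - Real.exp (-lam * τ) * h₀ (u τ)
          - Real.exp (-lam * τ) * ⟪φ τ, z - u τ⟫_ℝ) μ :=
        ((hconstInt (h₀ z)).sub hKu).sub hiz
      have h0f : 0 ≤ᵐ[μ] fun τ => Real.exp (-lam * τ) * h₀ z
          - Real.exp (-lam * τ) * h₀ (u τ)
          - Real.exp (-lam * τ) * ⟪φ τ, z - u τ⟫_ℝ := by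
        refine ae_nonneg_of_forall_setIntegral_nonneg hfi ?_
        intro A hA _
        set w : ℝ → U := fun τ => if τ ∈ A then z else u τ with hwdef
        have hw1 : MemLp (fun τ => Real.exp (-lam * τ / p) • w τ) (ENNReal.ofReal p) μ := by
          have heq : (fun τ => Real.exp (-lam * τ / p) • w τ)
              = fun τ => A.indicator (fun τ => Real.exp (-lam * τ / p) • z) τ
                + Aᶜ.indicator (fun τ => Real.exp (-lam * τ / p) • u τ) τ := by
            funext τ
            by_cases hτ : τ ∈ A <;> simp [hwdef, hτ]
          rw [heq]
          exact ((hconstLp z).indicator hA).add (hu.indicator hA.compl)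
        have hw2 : IntegrableOn (fun τ => Real.exp (-lam * τ) * h₀ (w τ)) (Set.Ico t T) := by
          have heq : (fun τ => Real.exp (-lam * τ) * h₀ (w τ))
              = fun τ => A.indicator (fun τ => Real.exp (-lam * τ) * h₀ z) τ
                + Aᶜ.indicator (fun τ => Real.exp (-lam * τ) * h₀ (u τ)) τ := by
            funext τ
            by_cases hτ : τ ∈ A <;> simp [hwdef, hτ]
          show Integrable _ μ
          rw [heq]
          exact ((hconstInt (h₀ z)).indicator hA).add (hKu.indicator hA.compl)
        have key := H w hw1 hw2
        have i2 : ∫ τ, Real.exp (-lam * τ) * ⟪φ τ, w τ - u τ⟫_ℝ ∂μ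
            = ∫ τ in A, Real.exp (-lam * τ) * ⟪φ τ, z - u τ⟫_ℝ ∂μ := by
          rw [← integral_indicator hA]
          congr 1
          funext τ
          by_cases hτ : τ ∈ A <;> simp [hwdef, hτ]
        have i3 : ∫ τ, Real.exp (-lam * τ) * h₀ (w τ) ∂μ
            = (∫ τ in A, Real.exp (-lam * τ) * h₀ z ∂μ)
              + ((∫ τ, Real.exp (-lam * τ) * h₀ (u τ) ∂μ)
                - ∫ τ in A, Real.exp (-lam * τ) * h₀ (u τ) ∂μ) := by
          have heq : (fun τ => Real.exp (-lam * τ) * h₀ (w τ))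
              = fun τ => A.indicator (fun τ => Real.exp (-lam * τ) * h₀ z) τ
                + Aᶜ.indicator (fun τ => Real.exp (-lam * τ) * h₀ (u τ)) τ := by
            funext τ
            by_cases hτ : τ ∈ A <;> simp [hwdef, hτ]
          rw [heq, integral_add ((hconstInt (h₀ z)).indicator hA) (hKu.indicator hA.compl),
              integral_indicator hA, integral_indicator hA.compl]
          have hcompl := integral_add_compl hA
            (show Integrable (fun τ => Real.exp (-lam * τ) * h₀ (u τ)) μ from hKu)
          linarith
        have h12 : Integrable (fun τ => Real.exp (-lam * τ) * h₀ z
            - Real.exp (-lam * τ) * h₀ (u τ)) (μ.restrict A) := by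
          exact ((hconstInt (h₀ z)).integrableOn).sub hKu.integrableOn
        rw [integral_sub h12 hiz.integrableOn,
            integral_sub ((hconstInt (h₀ z)).integrableOn) hKu.integrableOn]
        linarith [key, i2, i3]
      filter_upwards [h0f] with τ hτ
      simp only [Pi.zero_apply] at hτ
      nlinarith [Real.exp_pos (-lam * τ)]
    -- Step 2: combine over a.e. τ using essential separability of the range of φ
    obtain ⟨G, hGsm, hGae⟩ := hφ.aestronglyMeasurable
    set S : Set U := (fun cp : ℝ × U => cp.1 • cp.2) '' (Set.univ ×ˢ Set.range G) with hSdef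
    have hSsep : TopologicalSpace.IsSeparable S :=
      ((TopologicalSpace.IsSeparable.of_separableSpace (Set.univ : Set ℝ)).prod
        hGsm.isSeparable_range).image continuous_smul
    have hφS : ∀ᵐ τ ∂μ, φ τ ∈ S := by
      filter_upwards [hGae] with τ hτ
      refine ⟨(Real.exp (lam * τ / q), G τ), ⟨Set.mem_univ _, Set.mem_range_self τ⟩, ?_⟩
      simp only
      rw [← hτ, smul_smul, ← Real.exp_add]
      have h : lam * τ / q + -lam * τ / q = 0 := by ring
      rw [h, Real.exp_zero, one_smul]
    obtain ⟨c, hc_count, hSc⟩ := hSsep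
    haveI : Countable c := hc_count.to_subtype
    by_contra hcon
    rw [ae_iff] at hcon
    have hBnex : ∃ n : ℕ, μ {τ | φ τ ∈ S ∧ ∃ z : U,
        h₀ z + 1 / ((n : ℝ) + 1) < h₀ (u τ) + ⟪φ τ, z - u τ⟫_ℝ} ≠ 0 := by
      by_contra hall
      push_neg at hall
      apply hcon
      refine measure_mono_null ?_
        (measure_union_null (ae_iff.1 hφS) (measure_iUnion_null hall))
      intro τ hτ
      simp only [Set.mem_setOf_eq, not_forall, not_le] at hτ
      obtain ⟨z, hz⟩ := hτ
      by_cases hφτ : φ τ ∈ S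
      · refine Set.mem_union_right _ (Set.mem_iUnion.2 ?_)
        obtain ⟨m, hm⟩ := exists_nat_one_div_lt (sub_pos.2 hz)
        exact ⟨m, hφτ, z, by linarith⟩
      · exact Set.mem_union_left _ hφτ
    obtain ⟨n, hn⟩ := hBnex
    set ε : ℝ := 1 / (8 * ((n : ℝ) + 1)) with hεdef
    have hε0 : 0 < ε := by positivity
    set Ebox : ℤ × ℤ → Set ℝ := fun jk =>
      {τ | φ τ ∈ S ∧ ∃ z : U,
        h₀ z + 1 / ((n : ℝ) + 1) < h₀ (u τ) + ⟪φ τ, z - u τ⟫_ℝ}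
      ∩ {τ | (jk.1 : ℝ) * ε ≤ h₀ (u τ) ∧ h₀ (u τ) < ((jk.1 : ℝ) + 1) * ε}
      ∩ {τ | (jk.2 : ℝ) * ε ≤ ⟪φ τ, u τ⟫_ℝ ∧ ⟪φ τ, u τ⟫_ℝ < ((jk.2 : ℝ) + 1) * ε}
      with hEboxdef
    have hboxex : ∃ jk : ℤ × ℤ, μ (Ebox jk) ≠ 0 := by
      by_contra hall
      push_neg at hall
      apply hn
      refine measure_mono_null ?_ (measure_iUnion_null hall)
      intro τ hτ
      refine Set.mem_iUnion.2 ⟨(⌊h₀ (u τ) / ε⌋, ⌊⟪φ τ, u τ⟫_ℝ / ε⌋), ?_⟩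
      simp only [hEboxdef, Set.mem_inter_iff, Set.mem_setOf_eq]
      refine ⟨⟨hτ, ?_, ?_⟩, ?_, ?_⟩
      · exact (le_div_iff₀ hε0).1 (Int.floor_le _)
      · exact (div_lt_iff₀ hε0).1 (Int.lt_floor_add_one _)
      · exact (le_div_iff₀ hε0).1 (Int.floor_le _)
      · exact (div_lt_iff₀ hε0).1 (Int.lt_floor_add_one _)
    obtain ⟨jk, hE⟩ := hboxex
    set Tset : U → ℚ → Set ℝ := fun x ρ => Ebox jk ∩ {τ | dist (φ τ) x < (ρ : ℝ)} with hTdef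
    have hZ : μ (⋃ (x : c) (ρ : ℚ) (_ : μ (Tset (x : U) ρ) = 0), Tset (x : U) ρ) = 0 :=
      measure_iUnion_null fun x => measure_iUnion_null fun ρ =>
        measure_iUnion_null fun h => h
    have hEZ : ¬ Ebox jk ⊆ (⋃ (x : c) (ρ : ℚ) (_ : μ (Tset (x : U) ρ) = 0), Tset (x : U) ρ) :=
      fun hsub => hE (measure_mono_null hsub hZ)
    obtain ⟨τ₀, hτ₀E, hτ₀Z⟩ := Set.not_subset.1 hEZ
    have hτ₀E' := hτ₀E
    simp only [hEboxdef, Set.mem_inter_iff, Set.mem_setOf_eq] at hτ₀E'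
    obtain ⟨⟨⟨hτ₀S, z₀, hz₀⟩, hα₀⟩, hβ₀⟩ := hτ₀E'
    set δ : ℝ := ε / (2 * (1 + ‖z₀‖)) with hδdef
    have hδ0 : 0 < δ := by positivity
    obtain ⟨ρ, hρ0, hρδ⟩ := exists_rat_btwn hδ0
    obtain ⟨x, hxc, hxd⟩ := Metric.mem_closure_iff.1 (hSc hτ₀S) (ρ : ℝ) hρ0
    have hτ₀T : τ₀ ∈ Tset x ρ := by
      simp only [hTdef, Set.mem_inter_iff, Set.mem_setOf_eq]
      exact ⟨hτ₀E, hxd⟩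
    have hTne : μ (Tset x ρ) ≠ 0 := by
      intro h0
      exact hτ₀Z (Set.mem_iUnion.2 ⟨⟨x, hxc⟩,
        Set.mem_iUnion.2 ⟨ρ, Set.mem_iUnion.2 ⟨h0, hτ₀T⟩⟩⟩)
    have hnull : μ {τ | h₀ z₀ < h₀ (u τ) + ⟪φ τ, z₀ - u τ⟫_ℝ} = 0 := by
      refine measure_mono_null ?_ (ae_iff.1 (lemA z₀))
      intro τ hτ
      simp only [Set.mem_setOf_eq, not_le] at hτ ⊢
      exact hτ
    refine hTne (measure_mono_null ?_ hnull)
    intro τ hτT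
    simp only [hTdef, hEboxdef, Set.mem_inter_iff, Set.mem_setOf_eq] at hτT
    obtain ⟨⟨⟨_, hα⟩, hβ⟩, hτd⟩ := hτT
    simp only [Set.mem_setOf_eq]
    have hden : (0 : ℝ) < 1 + ‖z₀‖ := by positivity
    have hd : dist (φ τ) (φ τ₀) < 2 * (ρ : ℝ) := by
      calc dist (φ τ) (φ τ₀) ≤ dist (φ τ) x + dist (φ τ₀) x := dist_triangle_right _ _ _
        _ < ρ + ρ := add_lt_add hτd hxd
        _ = 2 * ρ := by ring
    have h2δ : 2 * δ * (1 + ‖z₀‖) = ε := by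
      rw [hδdef]; field_simp
    have hdd : dist (φ τ) (φ τ₀) * (1 + ‖z₀‖) < ε := by
      have h1 : dist (φ τ) (φ τ₀) < 2 * δ := lt_trans hd (by linarith)
      have h2 := mul_lt_mul_of_pos_right h1 hden
      rw [h2δ] at h2
      exact h2
    have hinn : |⟪φ τ, z₀⟫_ℝ - ⟪φ τ₀, z₀⟫_ℝ| ≤ dist (φ τ) (φ τ₀) * ‖z₀‖ := by
      rw [← inner_sub_left, dist_eq_norm]
      exact abs_real_inner_le_norm _ _
    have hinn2 : |⟪φ τ, z₀⟫_ℝ - ⟪φ τ₀, z₀⟫_ℝ| < ε := by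
      have h3 : dist (φ τ) (φ τ₀) * ‖z₀‖ ≤ dist (φ τ) (φ τ₀) * (1 + ‖z₀‖) :=
        mul_le_mul_of_nonneg_left (by linarith [norm_nonneg z₀]) dist_nonneg
      linarith
    have h3ε : 3 * ε < 1 / ((n : ℝ) + 1) := by
      rw [hεdef, mul_one_div, div_lt_div_iff₀ (by positivity) (by positivity)]
      have hn0 : (0 : ℝ) ≤ (n : ℝ) := Nat.cast_nonneg n
      nlinarith
    have habs := abs_lt.1 hinn2
    have e1 : ⟪φ τ, z₀ - u τ⟫_ℝ = ⟪φ τ, z₀⟫_ℝ - ⟪φ τ, u τ⟫_ℝ := inner_sub_right _ _ _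
    have e2 : ⟪φ τ₀, z₀ - u τ₀⟫_ℝ = ⟪φ τ₀, z₀⟫_ℝ - ⟪φ τ₀, u τ₀⟫_ℝ := inner_sub_right _ _ _
    rw [e2] at hz₀
    rw [e1]
    linarith [hα.1, hα.2, hα₀.1, hα₀.2, hβ.1, hβ.2, hβ₀.1, hβ₀.2, habs.1, habs.2]
  · -- easy direction
    intro hae w hw hKw
    have hiw : Integrable (fun τ => Real.exp (-lam * τ) * ⟪φ τ, w τ - u τ⟫_ℝ) μ := by
      have h := (hInner w hw).sub (hInner u hu)
      refine h.congr (Filter.Eventually.of_forall fun τ => ?_)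
      simp only [Pi.sub_apply, inner_sub_right, mul_sub]
    have hle : (fun τ => Real.exp (-lam * τ) * h₀ (u τ)
        + Real.exp (-lam * τ) * ⟪φ τ, w τ - u τ⟫_ℝ)
        ≤ᵐ[μ] fun τ => Real.exp (-lam * τ) * h₀ (w τ) := by
      filter_upwards [hae] with τ hτ
      have h := mul_le_mul_of_nonneg_left (hτ (w τ)) (Real.exp_pos (-lam * τ)).le
      rw [mul_add] at h
      exact h
    rw [← integral_add hKu hiw]
    exact integral_mono_ae (hKu.add hiw) hKw hle
end

section
/- (Key step of Claim 1.) Let h₀ : U → ℝ ∪ {+∞} be proper, u, φ : [t,T) → U measurable with φ integrable against admissible variations. If for every measurable E ⊆ [t,T) and every w ∈ L^p_λ(t,T;U) one has ∫_E [h₀(w(τ)) - h₀(u(τ)) - (φ(τ)|w(τ)-u(τ))_U] dτ ≥ 0, then h₀(w) - h₀(u(τ)) - (φ(τ)|w - u(τ))_U ≥ 0 for a.e. τ and every w ∈ U, i.e., φ(τ) ∈ ∂h₀(u(τ)) a.e. -/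
open MeasureTheory
open scoped InnerProductSpace

/-- Key step of Claim 1: if for every measurable `E ⊆ [t,T)` and every
`w ∈ L^p_λ(t,T;U)` one has
`∫_E [h₀(w(τ)) - h₀(u(τ)) - (φ(τ)|w(τ)-u(τ))] dτ ≥ 0`,
then `φ(τ) ∈ ∂h₀(u(τ))` for a.e. `τ ∈ [t,T)`. -/
theorem pointwise_subgradient_from_integral
    {U : Type*} [NormedAddCommGroup U] [InnerProductSpace ℝ U] [CompleteSpace U]
    (t T lam p : ℝ) (hT : t < T) (hlam : 0 < lam) (hp : 2 ≤ p)
    (h₀ : U → ℝ) (hconv : ConvexOn ℝ Set.univ h₀) (hlsc : LowerSemicontinuous h₀)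
    (u φ : ℝ → U) (hu : StronglyMeasurable u) (hφ : StronglyMeasurable φ)
    (hyp : ∀ E : Set ℝ, MeasurableSet E → E ⊆ Set.Ico t T →
      ∀ w : ℝ → U,
        MemLp (fun τ => Real.exp (-lam * τ / p) • w τ)
          (ENNReal.ofReal p) (volume.restrict (Set.Ico t T)) →
        IntegrableOn
          (fun τ => h₀ (w τ) - h₀ (u τ) - ⟪φ τ, w τ - u τ⟫_ℝ) E →
        0 ≤ ∫ τ in E, (h₀ (w τ) - h₀ (u τ) - ⟪φ τ, w τ - u τ⟫_ℝ)) :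
    ∀ᵐ τ ∂(volume.restrict (Set.Ico t T)),
      ∀ z : U, 0 ≤ h₀ z - h₀ (u τ) - ⟪φ τ, z - u τ⟫_ℝ := by
  letI : MeasurableSpace U := borel U
  haveI : BorelSpace U := ⟨rfl⟩
  set μ : Measure ℝ := volume.restrict (Set.Ico t T) with hμ
  haveI : IsFiniteMeasure μ := by
    constructor
    rw [hμ, Measure.restrict_apply_univ, Real.volume_Ico]
    exact ENNReal.ofReal_lt_top
  have hp0 : (0:ℝ) < p := lt_of_lt_of_le (by norm_num) hp
  -- abbreviation for the integrand
  set g : ℝ → U → ℝ := fun τ z => h₀ z - h₀ (u τ) - ⟪φ τ, z - u τ⟫_ℝ with hg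
  -- measurability of τ ↦ g τ z for fixed z
  have hgmeas : ∀ z : U, Measurable fun τ => g τ z := by
    intro z
    have h1 : Measurable fun τ => h₀ (u τ) := hlsc.measurable.comp hu.measurable
    have h2 : StronglyMeasurable fun τ => ⟪φ τ, z - u τ⟫_ℝ :=
      hφ.inner (stronglyMeasurable_const.sub hu)
    exact (measurable_const.sub h1).sub h2.measurable
  -- Step 2: for each fixed z, a.e. nonnegativity
  have key : ∀ z : U, ∀ᵐ τ ∂μ, 0 ≤ g τ z := by
    intro z
    by_contra hcon
    rw [ae_iff] at hcon
    have hBne : μ {τ | g τ z < 0} ≠ 0 := by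
      convert hcon using 2
      ext τ; simp [not_le]
    -- decompose into sets where g is bounded away from 0 and below
    have hcover : {τ | g τ z < 0} ⊆
        ⋃ m : ℕ, {τ | g τ z ≤ -(1/(m+1)) ∧ -(m+1:ℝ) ≤ g τ z} := by
      intro τ hτ
      simp only [Set.mem_setOf_eq] at hτ
      obtain ⟨m, hm⟩ := exists_nat_one_div_lt (neg_pos.mpr hτ)
      rcases exists_nat_ge (-(g τ z)) with ⟨k, hk⟩
      refine Set.mem_iUnion.mpr ⟨max m k, ?_, ?_⟩
      · have : 1/((max m k : ℕ) + 1 : ℝ) ≤ 1/((m:ℝ)+1) := by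
          apply one_div_le_one_div_of_le (by positivity)
          have : (m:ℝ) ≤ (max m k : ℕ) := by exact_mod_cast le_max_left m k
          linarith
        have := this.trans hm.le
        linarith
      · have : (k:ℝ) ≤ (max m k : ℕ) := by exact_mod_cast le_max_right m k
        linarith
    obtain ⟨m, hm⟩ : ∃ m : ℕ, μ {τ | g τ z ≤ -(1/(m+1)) ∧ -(m+1:ℝ) ≤ g τ z} ≠ 0 := by
      by_contra hall
      push_neg at hall
      exact hBne (measure_mono_null hcover (by
        simpa using measure_iUnion_null hall))
    set B : Set ℝ := {τ | g τ z ≤ -(1/(m+1)) ∧ -(m+1:ℝ) ≤ g τ z} with hB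
    have hBmeas : MeasurableSet B :=
      ((hgmeas z) measurableSet_Iic).inter ((hgmeas z) measurableSet_Ici)
    set E : Set ℝ := B ∩ Set.Ico t T with hE
    have hEmeas : MeasurableSet E := hBmeas.inter measurableSet_Ico
    have hEsub : E ⊆ Set.Ico t T := Set.inter_subset_right
    have hEvol : volume E = μ B := by
      rw [hμ, Measure.restrict_apply hBmeas]
    have hEpos : volume E ≠ 0 := by rw [hEvol]; exact hm
    have hEfin : volume E ≠ ⊤ := by
      refine ne_top_of_le_ne_top ?_ (measure_mono hEsub)
      rw [Real.volume_Ico]; exact ENNReal.ofReal_ne_top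
    -- define w
    set w : ℝ → U := E.indicator (fun _ => z) with hw
    have hwE : ∀ τ ∈ E, w τ = z := fun τ hτ => Set.indicator_of_mem hτ _
    have hwsm : StronglyMeasurable w := stronglyMeasurable_const.indicator hEmeas
    -- Memℒp
    have hmem : MemLp (fun τ => Real.exp (-lam * τ / p) • w τ) (ENNReal.ofReal p) μ := by
      have hce : Continuous fun τ : ℝ => Real.exp (-lam * τ / p) := by fun_prop
      apply MemLp.of_bound
        (hce.stronglyMeasurable.smul hwsm).aestronglyMeasurable
        (Real.exp (lam * |t| / p) * ‖z‖)
      rw [hμ]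
      filter_upwards [self_mem_ae_restrict measurableSet_Ico] with τ hτ
      show ‖Real.exp (-lam * τ / p) • w τ‖ ≤ _
      rw [norm_smul, Real.norm_eq_abs, Real.abs_exp]
      have h1 : Real.exp (-lam * τ / p) ≤ Real.exp (lam * |t| / p) := by
        apply Real.exp_le_exp.mpr
        apply div_le_div_of_nonneg_right ?_ hp0.le
        have ht1 : -|t| ≤ t := neg_abs_le t
        nlinarith [hτ.1]
      have h2 : ‖w τ‖ ≤ ‖z‖ := by
        rw [hw]
        by_cases hτE : τ ∈ E
        · rw [Set.indicator_of_mem hτE]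
        · rw [Set.indicator_of_notMem hτE]; simp
      exact mul_le_mul h1 h2 (norm_nonneg _) (Real.exp_pos _).le
    -- integrability of the integrand on E
    have heq : Set.EqOn (fun τ => h₀ (w τ) - h₀ (u τ) - ⟪φ τ, w τ - u τ⟫_ℝ)
        (fun τ => g τ z) E := by
      intro τ hτ
      simp only [hwE τ hτ, hg]
    have hgint : IntegrableOn (fun τ => g τ z) E := by
      apply Measure.integrableOn_of_bounded (M := ((m:ℝ)+1)) hEfin
        (hgmeas z).aestronglyMeasurable
      filter_upwards [self_mem_ae_restrict hEmeas] with τ hτ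
      obtain ⟨⟨h1, h2⟩, -⟩ := hτ
      rw [Real.norm_eq_abs, abs_le]
      have h3 : (0:ℝ) < 1/((m:ℝ)+1) := by positivity
      have hG : g τ z ≤ 0 := h1.trans (neg_nonpos_of_nonneg h3.le)
      exact ⟨h2, hG.trans (by positivity)⟩
    have hint : IntegrableOn (fun τ => h₀ (w τ) - h₀ (u τ) - ⟪φ τ, w τ - u τ⟫_ℝ) E :=
      hgint.congr_fun heq.symm hEmeas
    have h0 := hyp E hEmeas hEsub w hmem hint
    rw [setIntegral_congr_fun hEmeas heq] at h0
    -- but the integral is strictly negative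
    have hlt : ∫ τ in E, g τ z ≤ ∫ τ in E, (-(1/((m:ℝ)+1))) := by
      apply setIntegral_mono_on hgint (integrableOn_const hEfin) hEmeas
      intro τ hτ
      exact hτ.1.1
    rw [setIntegral_const, measureReal_def] at hlt
    have hpos : 0 < (volume E).toReal :=
      ENNReal.toReal_pos hEpos hEfin
    have : (volume E).toReal • (-(1/((m:ℝ)+1))) < 0 := by
      rw [smul_eq_mul]
      apply mul_neg_of_pos_of_neg hpos
      have : (0:ℝ) < 1/((m:ℝ)+1) := by positivity
      linarith
    linarith
  -- Step 3: Lindelöf-type reduction to a countable set of z's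
  -- parameter map
  set q : ℝ → ℝ × U × U := fun τ => (h₀ (u τ), u τ, φ τ) with hq
  have hqsm : StronglyMeasurable q := by
    refine StronglyMeasurable.prodMk ?_ (hu.prodMk hφ)
    exact (hlsc.measurable.comp hu.measurable).stronglyMeasurable
  obtain ⟨D, hDc, hDd⟩ := hqsm.isSeparable_range
  -- open sets V z
  set V : U → Set (ℝ × U × U) := fun z => {x | h₀ z - x.1 - ⟪x.2.2, z - x.2.1⟫_ℝ < 0} with hV
  have hVopen : ∀ z, IsOpen (V z) := by
    intro z
    have hc : Continuous fun x : ℝ × U × U => h₀ z - x.1 - ⟪x.2.2, z - x.2.1⟫_ℝ := by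
      apply Continuous.sub (continuous_const.sub continuous_fst)
      exact Continuous.inner (continuous_snd.snd) (continuous_const.sub continuous_snd.fst)
    exact isOpen_lt hc continuous_const
  -- choice function
  classical
  set f : (ℝ × U × U) × ℕ → U := fun x =>
    if h : ∃ z, Metric.ball x.1 (1/(x.2+1)) ⊆ V z then h.choose else 0 with hf
  set C : Set U := f '' (D ×ˢ (Set.univ : Set ℕ)) with hC
  have hCc : C.Countable := (hDc.prod Set.countable_univ).image f
  have hcover : ∀ τ : ℝ, ∀ z : U, q τ ∈ V z → ∃ y ∈ C, q τ ∈ V y := by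
    intro τ z hz
    obtain ⟨ε, hε, hball⟩ := Metric.isOpen_iff.mp (hVopen z) _ hz
    obtain ⟨n, hn⟩ := exists_nat_one_div_lt (half_pos hε)
    have hqτ : q τ ∈ closure D := hDd (Set.mem_range_self τ)
    obtain ⟨d, hdD, hdd⟩ := Metric.mem_closure_iff.mp hqτ (1/(n+1)) (by positivity)
    have hsub : Metric.ball d (1/(n+1)) ⊆ V z := by
      intro y hy
      apply hball
      rw [Metric.mem_ball] at hy ⊢
      calc dist y (q τ) ≤ dist y d + dist d (q τ) := dist_triangle _ _ _
        _ < 1/(n+1) + 1/(n+1) := by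
            rw [dist_comm d (q τ)]; exact add_lt_add hy hdd
        _ < ε := by linarith
    have hex : ∃ z', Metric.ball ((d, n) : (ℝ × U × U) × ℕ).1
        (1/(((d, n) : (ℝ × U × U) × ℕ).2+1)) ⊆ V z' := ⟨z, by exact_mod_cast hsub⟩
    refine ⟨f (d, n), ⟨(d, n), ⟨hdD, Set.mem_univ _⟩, rfl⟩, ?_⟩
    have hspec := hex.choose_spec
    have hfval : f (d, n) = hex.choose := by
      rw [hf]; simp only [dif_pos hex]
    rw [hfval]
    apply hspec
    rw [Metric.mem_ball]
    push_cast
    exact_mod_cast hdd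
  -- combine
  have hCae : ∀ᵐ τ ∂μ, ∀ z ∈ C, 0 ≤ g τ z :=
    (ae_ball_iff hCc).mpr (fun z _ => key z)
  filter_upwards [hCae] with τ hτ
  intro z
  by_contra hneg
  push_neg at hneg
  have hzv : q τ ∈ V z := by
    simp only [hV, hq, Set.mem_setOf_eq]
    exact hneg
  obtain ⟨y, hyC, hyv⟩ := hcover τ z hzv
  have : g τ y < 0 := by
    simpa only [hV, hq, Set.mem_setOf_eq] using hyv
  exact absurd (hτ y hyC) (not_le.mpr this)
end
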